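/- Let g be a C² function on an open set D ⊂ ℝ^{n-1} with g > 0, and suppose the Hessian of Φ(u) = (|u|² + g(u)²)/2 is positive semidefinite at a point u₀ ∈ D. Then for every b with 0 < b < g(u₀), the Hessian of Φ_{(a,b)}(u) = (|u−a|² + (g(u)−b)²)/2 at u₀ is positive definite; in fact for every unit vector ξ one has ξᵀ (∇²Φ_{(a,b)})(u₀) ξ ≥ min(1/2, b/(2(g(u₀)−b))). -/

import Mathlib

open Filter

noncomputable def Jmap {m : ℕ} : EuclideanSpace ℝ (Fin m) →L[ℝ]
    (EuclideanSpace ℝ (Fin m) →L[ℝ] ℝ) := innerSL ℝ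

@[simp] lemma Jmap_apply {m : ℕ} (x y : EuclideanSpace ℝ (Fin m)) :
    Jmap x y = inner ℝ x y := rfl

lemma hess_eval (D : Set (EuclideanSpace ℝ (Fin m))) (hD : IsOpen D)
    (g : EuclideanSpace ℝ (Fin m) → ℝ) (hg : ContDiffOn ℝ 2 g D)
    (u₀ : EuclideanSpace ℝ (Fin m)) (hu₀ : u₀ ∈ D) (t : ℝ)
    (a : EuclideanSpace ℝ (Fin m)) (F : EuclideanSpace ℝ (Fin m) → ℝ)
    (hF : ∀ u, F u = (‖u - a‖ ^ 2 + (g u - t) ^ 2) / 2)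
    (ξ : EuclideanSpace ℝ (Fin m)) :
    fderiv ℝ (fun x => fderiv ℝ F x) u₀ ξ ξ
      = ‖ξ‖ ^ 2 + (fderiv ℝ g u₀ ξ) ^ 2
        + (g u₀ - t) * (fderiv ℝ (fun x => fderiv ℝ g x) u₀ ξ ξ) := by
  set g' : EuclideanSpace ℝ (Fin m) → (EuclideanSpace ℝ (Fin m) →L[ℝ] ℝ) :=
    fun x => fderiv ℝ g x with hg'def
  have hgd : ∀ x ∈ D, HasFDerivAt g (g' x) x := fun x hx =>
    ((hg.differentiableOn (by norm_num)).differentiableAt (hD.mem_nhds hx)).hasFDerivAt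
  have hg'cd : ContDiffOn ℝ 1 g' D := hg.fderiv_of_isOpen hD le_rfl
  have hg'd : HasFDerivAt g' (fderiv ℝ g' u₀) u₀ :=
    ((hg'cd.differentiableOn (by norm_num)).differentiableAt (hD.mem_nhds hu₀)).hasFDerivAt
  set g'' := fderiv ℝ g' u₀ with hg''def
  set F' : EuclideanSpace ℝ (Fin m) → (EuclideanSpace ℝ (Fin m) →L[ℝ] ℝ) :=
    fun x => Jmap (x - a) + (g x - t) • g' x
    with hF'def
  have hFd : ∀ x ∈ D, HasFDerivAt F (F' x) x := by
    intro x hx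
    have h1 : HasFDerivAt (fun u : EuclideanSpace ℝ (Fin m) => ‖u - a‖ ^ 2)
        (2 • (innerSL ℝ (x - a)).comp (ContinuousLinearMap.id ℝ (EuclideanSpace ℝ (Fin m)))) x :=
      ((hasFDerivAt_id x).sub_const a).norm_sq
    have h2 : HasFDerivAt (fun u => (g u - t) * (g u - t))
        ((g x - t) • g' x + (g x - t) • g' x) x :=
      (((hgd x hx).sub_const t)).mul (((hgd x hx).sub_const t))
    have h3 := (h1.add h2).const_mul (1/2 : ℝ)
    have heq : F = fun u => (1/2 : ℝ) * (‖u - a‖ ^ 2 + (g u - t) * (g u - t)) := by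
      funext u; rw [hF u]; ring
    rw [heq]
    refine h3.congr_fderiv ?_
    ext y
    simp [F', two_smul]
    ring
  have hfe : (fun x => fderiv ℝ F x) =ᶠ[nhds u₀] F' :=
    Filter.eventually_of_mem (hD.mem_nhds hu₀) (fun x hx => (hFd x hx).fderiv)
  rw [hfe.fderiv_eq]
  have hA : HasFDerivAt (fun x : EuclideanSpace ℝ (Fin m) => Jmap (x - a)) Jmap u₀ := by
    have h := (Jmap.hasFDerivAt (x := u₀ - a)).comp u₀ ((hasFDerivAt_id u₀).sub_const a)
    rw [ContinuousLinearMap.comp_id] at h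
    exact h
  have hB : HasFDerivAt (fun x => (g x - t) • g' x)
      ((g u₀ - t) • g'' + (g' u₀).smulRight (g' u₀)) u₀ :=
    ((hgd u₀ hu₀).sub_const t).smul hg'd
  have hF'd : HasFDerivAt F'
      (Jmap + ((g u₀ - t) • g'' + (g' u₀).smulRight (g' u₀))) u₀ := hA.add hB
  rw [hF'd.fderiv]
  simp only [ContinuousLinearMap.add_apply, ContinuousLinearMap.smul_apply,
    ContinuousLinearMap.smulRight_apply, Jmap_apply, smul_eq_mul]
  rw [real_inner_self_eq_norm_sq]
  ring

/-- If the Hessian of `Φ(u) = (|u|²+g(u)²)/2` is positive semidefinite at `u₀`,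
then for `0 < b < g(u₀)` the Hessian of `Φ_{(a,b)}` at `u₀` is positive definite,
with quadratic form bounded below by `min(1/2, b/(2(g(u₀)−b)))` on unit vectors. -/
theorem stmt_1 {m : ℕ} (D : Set (EuclideanSpace ℝ (Fin m))) (hD : IsOpen D)
    (g : EuclideanSpace ℝ (Fin m) → ℝ) (hg : ContDiffOn ℝ 2 g D)
    (hgpos : ∀ u ∈ D, 0 < g u)
    (Φ : EuclideanSpace ℝ (Fin m) → ℝ)
    (hΦ : ∀ u, Φ u = (‖u‖ ^ 2 + (g u) ^ 2) / 2)
    (u₀ : EuclideanSpace ℝ (Fin m)) (hu₀ : u₀ ∈ D)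
    (hpsd : ∀ ξ : EuclideanSpace ℝ (Fin m),
      0 ≤ fderiv ℝ (fun x => fderiv ℝ Φ x) u₀ ξ ξ)
    (a : EuclideanSpace ℝ (Fin m)) (b : ℝ) (hb0 : 0 < b) (hbg : b < g u₀)
    (Φab : EuclideanSpace ℝ (Fin m) → ℝ)
    (hΦab : ∀ u, Φab u = (‖u - a‖ ^ 2 + (g u - b) ^ 2) / 2) :
    (∀ ξ : EuclideanSpace ℝ (Fin m), ‖ξ‖ = 1 →
        min (1 / 2) (b / (2 * (g u₀ - b)))
          ≤ fderiv ℝ (fun x => fderiv ℝ Φab x) u₀ ξ ξ)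
      ∧ ∀ ξ : EuclideanSpace ℝ (Fin m), ξ ≠ 0 →
          0 < fderiv ℝ (fun x => fderiv ℝ Φab x) u₀ ξ ξ := by
  have hc : 0 < g u₀ := hgpos u₀ hu₀
  have hΦ' : ∀ u, Φ u = (‖u - 0‖ ^ 2 + (g u - 0) ^ 2) / 2 := by
    intro u; rw [hΦ]; simp
  have hA := fun ξ => hess_eval D hD g hg u₀ hu₀ 0 0 Φ hΦ' ξ
  have hB := fun ξ => hess_eval D hD g hg u₀ hu₀ b a Φab hΦab ξ
  have key : ∀ ξ : EuclideanSpace ℝ (Fin m),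
      b / g u₀ * ‖ξ‖ ^ 2 ≤ fderiv ℝ (fun x => fderiv ℝ Φab x) u₀ ξ ξ := by
    intro ξ
    have h0 := hpsd ξ
    rw [hA ξ] at h0
    rw [hB ξ]
    have hgsq : 0 ≤ (fderiv ℝ g u₀ ξ) ^ 2 := sq_nonneg _
    have hn : 0 ≤ ‖ξ‖ ^ 2 := sq_nonneg _
    set H := fderiv ℝ (fun x => fderiv ℝ g x) u₀ ξ ξ with hH
    rw [div_mul_eq_mul_div, div_le_iff₀ hc]
    nlinarith [mul_nonneg (sub_nonneg.mpr hbg.le) h0]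
  constructor
  · intro ξ hξ
    have hk := key ξ
    rw [hξ] at hk
    have hmin : min (1 / 2) (b / (2 * (g u₀ - b))) ≤ b / g u₀ := by
      rcases le_or_gt (g u₀) (2 * b) with h | h
      · exact le_trans (min_le_left _ _) (by rw [le_div_iff₀ hc]; linarith)
      · refine le_trans (min_le_right _ _) ?_
        rw [div_le_div_iff₀ (by linarith) hc]
        nlinarith
    calc min (1 / 2) (b / (2 * (g u₀ - b))) ≤ b / g u₀ := hmin
      _ = b / g u₀ * 1 ^ 2 := by ring
      _ ≤ _ := hk
  · intro ξ hξ
    have hk := key ξ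
    have hpos : 0 < b / g u₀ * ‖ξ‖ ^ 2 := by
      have : ‖ξ‖ ≠ 0 := norm_ne_zero_iff.mpr hξ
      positivity
    linarith
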